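/- Let V be finite-dimensional and let α, β, γ be Lagrangian subspaces of (V, ω). Then α ∩ (β + γ) ∩ (β ∩ (α + γ))^ω = α ∩ β + α ∩ γ; that is, the kernel of the Hermitian form Q(α,β;γ) equals α ∩ β + α ∩ γ. -/

import Mathlib

open Module Submodule

/-- The annihilator of a subspace `lam` with respect to a sesquilinear form `ω`
(linear in the first variable, conjugate-linear in the second). -/
def symplAnn {V : Type*} [AddCommGroup V] [Module ℂ V]
    (ω : V →ₗ[ℂ] V →ₗ⋆[ℂ] ℂ) (lam : Submodule ℂ V) : Submodule ℂ V where
  carrier := {x | ∀ y ∈ lam, ω x y = 0}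
  add_mem' := by
    intro a b ha hb y hy
    simp [ha y hy, hb y hy]
  zero_mem' := by
    intro y hy
    simp
  smul_mem' := by
    intro c x hx y hy
    simp [hx y hy]

section Aux

variable {V : Type*} [AddCommGroup V] [Module ℂ V]
    (ω : V →ₗ[ℂ] V →ₗ⋆[ℂ] ℂ)
    (hSkew : ∀ x y : V, ω y x = -(starRingEnd ℂ) (ω x y))
    (hNd : ∀ x : V, (∀ y : V, ω x y = 0) → x = 0)

theorem mem_symplAnn {lam : Submodule ℂ V} {x : V} :
    x ∈ symplAnn ω lam ↔ ∀ y ∈ lam, ω x y = 0 := Iff.rfl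

/-- the real bilinear form -/
noncomputable def realForm : LinearMap.BilinForm ℝ V :=
  LinearMap.mk₂ ℝ (fun x y => (ω x y).re)
    (by intro x x' y; simp)
    (by intro r x y
        rw [← algebraMap_smul ℂ r x, map_smulₛₗ]
        simp)
    (by intro x y y'; simp)
    (by intro r x y
        rw [← algebraMap_smul ℂ r y, map_smulₛₗ]
        simp)

theorem realForm_apply (x y : V) : realForm ω x y = (ω x y).re := rfl

/-- `ω x y = 0` iff both real parts vanish -/
theorem ortho_iff (x y : V) :
    (ω x y = 0) ↔ ((ω x y).re = 0 ∧ (ω x (Complex.I • y)).re = 0) := by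
  have h : ω x (Complex.I • y) = -Complex.I * ω x y := by
    rw [map_smulₛₗ]
    simp [Complex.ext_iff]
  rw [h]
  constructor
  · rintro h0; simp [h0]
  · rintro ⟨h1, h2⟩
    have : (ω x y).im = 0 := by simpa using h2
    exact Complex.ext h1 this

include hSkew in
theorem symplAnn_eq_orthogonal (p : Submodule ℂ V) :
    (symplAnn ω p).restrictScalars ℝ =
      (realForm ω (V := V)).orthogonal (p.restrictScalars ℝ) := by
  ext x
  simp only [Submodule.restrictScalars_mem, LinearMap.BilinForm.mem_orthogonal_iff,
    mem_symplAnn]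
  constructor
  · intro h n hn
    have h2 : ω n x = 0 := by rw [hSkew]; simp [h n hn]
    show (ω n x).re = 0
    simp [h2]
  · intro h y hy
    have h1 : (ω y x).re = 0 := h y hy
    have h2 : (ω (Complex.I • y) x).re = 0 := h _ (p.smul_mem _ hy)
    have h3 : ω (Complex.I • y) x = Complex.I * ω y x := by simp
    have him : (ω y x).im = 0 := by
      rw [h3] at h2; simpa [Complex.mul_re] using h2
    have h0 : ω y x = 0 := Complex.ext h1 him
    rw [hSkew] at h0
    simpa using h0

include hSkew in
theorem realForm_isRefl : (realForm ω (V := V)).IsRefl := by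
  intro x y h
  show (ω _ _).re = 0
  rw [hSkew]
  simp only [Complex.neg_re, Complex.conj_re, neg_eq_zero]
  exact h

include hSkew hNd in
theorem realForm_nondeg : (realForm ω (V := V)).Nondegenerate := by
  refine (LinearMap.IsRefl.nondegenerate_iff_separatingLeft (realForm_isRefl ω hSkew)).mpr ?_
  intro x h
  apply hNd
  intro y
  rw [ortho_iff]
  exact ⟨h y, h (Complex.I • y)⟩

include hSkew hNd in
theorem symplAnn_symplAnn [FiniteDimensional ℂ V] (p : Submodule ℂ V) :
    symplAnn ω (symplAnn ω p) = p := by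
  haveI : FiniteDimensional ℝ V := FiniteDimensional.trans ℝ ℂ V
  apply Submodule.restrictScalars_injective ℝ
  rw [symplAnn_eq_orthogonal ω hSkew, symplAnn_eq_orthogonal ω hSkew]
  exact LinearMap.BilinForm.orthogonal_orthogonal (realForm_nondeg ω hSkew hNd)
    (realForm_isRefl ω hSkew) _

theorem symplAnn_sup (p q : Submodule ℂ V) :
    symplAnn ω (p ⊔ q) = symplAnn ω p ⊓ symplAnn ω q := by
  ext x
  simp only [Submodule.mem_inf, mem_symplAnn]
  constructor
  · intro h
    exact ⟨fun y hy => h y (Submodule.mem_sup_left hy),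
           fun y hy => h y (Submodule.mem_sup_right hy)⟩
  · rintro ⟨h1, h2⟩ y hy
    obtain ⟨a, ha, b, hb, rfl⟩ := Submodule.mem_sup.mp hy
    simp [h1 a ha, h2 b hb]

end Aux

theorem stmt6 {V : Type*} [AddCommGroup V] [Module ℂ V] [FiniteDimensional ℂ V]
    (ω : V →ₗ[ℂ] V →ₗ⋆[ℂ] ℂ)
    (hSkew : ∀ x y : V, ω y x = -(starRingEnd ℂ) (ω x y))
    (hNd : ∀ x : V, (∀ y : V, ω x y = 0) → x = 0)
    (α β γ : Submodule ℂ V)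
    (hα : α = symplAnn ω α) (hβ : β = symplAnn ω β) (hγ : γ = symplAnn ω γ) :
    α ⊓ (β ⊔ γ) ⊓ symplAnn ω (β ⊓ (α ⊔ γ)) = (α ⊓ β) ⊔ (α ⊓ γ) := by
  have hαγ : symplAnn ω (α ⊔ γ) = α ⊓ γ := by
    rw [symplAnn_sup, ← hα, ← hγ]
  have hkey : symplAnn ω (β ⊓ (α ⊔ γ)) = β ⊔ (α ⊓ γ) := by
    have h1 : symplAnn ω (β ⊔ (α ⊓ γ)) = β ⊓ (α ⊔ γ) := by
      rw [symplAnn_sup, ← hβ, ← hαγ, symplAnn_symplAnn ω hSkew hNd]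
    rw [← h1, symplAnn_symplAnn ω hSkew hNd]
  rw [hkey]
  apply le_antisymm
  · intro x hx
    obtain ⟨hx1, hx2⟩ := Submodule.mem_inf.mp hx
    obtain ⟨hxα, -⟩ := Submodule.mem_inf.mp hx1
    obtain ⟨b, hb, d, hd, rfl⟩ := Submodule.mem_sup.mp hx2
    obtain ⟨hd1, hd2⟩ := Submodule.mem_inf.mp hd
    have hbα : b ∈ α := by
      have hb' : b = (b + d) - d := (add_sub_cancel_right b d).symm
      rw [hb']; exact α.sub_mem hxα hd1
    exact Submodule.add_mem_sup (Submodule.mem_inf.mpr ⟨hbα, hb⟩) hd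
  · intro x hx
    obtain ⟨a, ha, c, hc, rfl⟩ := Submodule.mem_sup.mp hx
    obtain ⟨ha1, ha2⟩ := Submodule.mem_inf.mp ha
    obtain ⟨hc1, hc2⟩ := Submodule.mem_inf.mp hc
    refine Submodule.mem_inf.mpr ⟨Submodule.mem_inf.mpr
      ⟨α.add_mem ha1 hc1, Submodule.add_mem_sup ha2 hc2⟩, ?_⟩
    exact Submodule.add_mem _ (Submodule.mem_sup_left ha2) (Submodule.mem_sup_right hc)
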